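/- arXiv:2305.08955 — 2 statements merged into one kernel-verified Lean document; each statement's English description precedes it below -/
import Mathlib

section
/- Let p be an odd prime (p ≠ 2), let K = ℚ(ζ_p) be the p-th cyclotomic field, let R be its ring of integers, and let ζ be a primitive p-th root of unity in R. Then every unit u of R can be written as u = x * ζ^n for some unit x of R and some integer n ∈ ℤ, where the image of x in K is fixed by complex conjugation (i.e., by the automorphism of K over ℚ sending ζ to ζ⁻¹). -/
set_option synthInstance.maxHeartbeats 1000000
set_option maxHeartbeats 1000000

open NumberField Polynomial

section aux

variable {n : ℕ+} {K : Type*} [Field K] [CharZero K] [IsCyclotomicExtension {(n : ℕ)} ℚ K]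

lemma UL.conj_ext {ζK : K} (hζK : IsPrimitiveRoot ζK n) {σ σ' : K ≃ₐ[ℚ] K}
    (h : σ ζK = σ' ζK) : σ = σ' := by
  apply AlgEquiv.coe_algHom_injective
  apply (hζK.powerBasis ℚ).algHom_ext
  rwa [hζK.powerBasis_gen ℚ]

lemma UL.exists_conj {ζK : K} (hζK : IsPrimitiveRoot ζK n) :
    ∃ σ : K ≃ₐ[ℚ] K, σ ζK = ζK⁻¹ := by
  have hirr : Irreducible (cyclotomic (n : ℕ) ℚ) := cyclotomic.irreducible_rat n.pos
  have h1 : minpoly ℚ ζK = minpoly ℚ (ζK⁻¹) := by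
    rw [← hζK.minpoly_eq_cyclotomic_of_irreducible hirr,
      ← hζK.inv.minpoly_eq_cyclotomic_of_irreducible hirr]
  refine ⟨(hζK.powerBasis ℚ).equivOfMinpoly (hζK.inv.powerBasis ℚ) ?_, ?_⟩
  · rwa [hζK.powerBasis_gen ℚ, hζK.inv.powerBasis_gen ℚ]
  · have := (hζK.powerBasis ℚ).equivOfMinpoly_gen (hζK.inv.powerBasis ℚ)
      (by rwa [hζK.powerBasis_gen ℚ, hζK.inv.powerBasis_gen ℚ])
    simpa only [IsPrimitiveRoot.powerBasis_gen] using this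

lemma UL.embed_conj {ζK : K} (hζK : IsPrimitiveRoot ζK n) (σ : K ≃ₐ[ℚ] K)
    (hσ : σ ζK = ζK⁻¹) (φ : K →+* ℂ) (x : K) : φ (σ x) = star (φ x) := by
  have hw : φ ζK ^ (n : ℕ) = 1 := by rw [← map_pow, hζK.pow_eq_one, map_one]
  have hnorm : ‖φ ζK‖ = 1 := Complex.norm_eq_one_of_pow_eq_one hw n.ne_zero
  have hmul : φ ζK * star (φ ζK) = 1 := by
    rw [Complex.star_def, Complex.mul_conj, Complex.normSq_eq_norm_sq, hnorm]
    norm_num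
  have hstar : star (φ ζK) = (φ ζK)⁻¹ := (inv_eq_of_mul_eq_one_right hmul).symm
  have key : ((starRingEnd ℂ).comp (φ.comp (σ : K →+* K))).toRatAlgHom
      = φ.toRatAlgHom := by
    apply (hζK.powerBasis ℚ).algHom_ext
    rw [hζK.powerBasis_gen ℚ]
    show (starRingEnd ℂ) (φ (σ ζK)) = φ ζK
    rw [hσ, map_inv₀, map_inv₀, ← Complex.star_def, hstar, inv_inv]
  have h2 : (starRingEnd ℂ) (φ (σ x)) = φ x := by
    exact congrArg (fun (f : K →ₐ[ℚ] ℂ) => f x) key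
  calc φ (σ x) = star (star (φ (σ x))) := (star_star _).symm
    _ = star (φ x) := by rw [show star (φ (σ x)) = φ x from h2]

end aux

/-- If `p ≠ 2` is a prime, `K = ℚ(ζ_p)` with ring of integers `R` and `ζ ∈ R` a primitive
`p`-th root of unity, then every unit `u` of `R` is of the form `u = x * ζ ^ n` with `n ∈ ℤ`
and `x` a unit of `R` whose image in `K` is fixed by complex conjugation, i.e. by any
automorphism of `K` over `ℚ` sending `ζ` to `ζ⁻¹`. -/
theorem unit_lemma_gal_conj {p : ℕ} [hp : Fact p.Prime] (hodd : p ≠ 2)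
    {K : Type*} [Field K] [CharZero K] [IsCyclotomicExtension {p} ℚ K]
    {ζ : 𝓞 K} (hζ : IsPrimitiveRoot ζ p) (u : (𝓞 K)ˣ) :
    ∃ (x : (𝓞 K)ˣ) (n : ℤ),
      (∀ σ : K ≃ₐ[ℚ] K, σ (algebraMap (𝓞 K) K ζ) = (algebraMap (𝓞 K) K ζ)⁻¹ →
        σ (algebraMap (𝓞 K) K x) = algebraMap (𝓞 K) K x) ∧
      u = x * (hζ.isUnit hp.out.ne_zero).unit ^ n := by
  haveI : NumberField K := IsCyclotomicExtension.numberField {p} ℚ K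
  set pn : ℕ+ := ⟨p, hp.out.pos⟩ with hpn
  have hppn : (pn : ℕ) = p := rfl
  haveI : IsCyclotomicExtension {(pn : ℕ)} ℚ K := by rw [hppn]; infer_instance
  set ζK : K := algebraMap (𝓞 K) K ζ with hζKdef
  have hζK : IsPrimitiveRoot ζK p :=
    hζ.map_of_injective RingOfIntegers.coe_injective
  have hζKpn : IsPrimitiveRoot ζK (pn : ℕ) := hζK
  -- the conjugation automorphism
  obtain ⟨σ, hσ⟩ := UL.exists_conj hζKpn
  set η : (𝓞 K)ˣ := (hζ.isUnit hp.out.ne_zero).unit with hηdef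
  have hηcoe : ((η : (𝓞 K)ˣ) : 𝓞 K) = ζ := rfl
  -- restriction of σ to the ring of integers
  set σR : 𝓞 K ≃ₐ[ℤ] 𝓞 K := galRestrict ℤ ℚ K (𝓞 K) σ with hσRdef
  have hσRmap : ∀ v : 𝓞 K, algebraMap (𝓞 K) K (σR v) = σ (algebraMap (𝓞 K) K v) :=
    fun v => algebraMap_galRestrict_apply ℤ σ v
  set SM : (𝓞 K)ˣ →* (𝓞 K)ˣ := Units.map (σR : 𝓞 K →* 𝓞 K) with hSMdef
  set uσ : (𝓞 K)ˣ := SM u with huσdef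
  have huσcoe : ((uσ : (𝓞 K)ˣ) : 𝓞 K) = σR ((u : (𝓞 K)ˣ) : 𝓞 K) := rfl
  -- σR ζ = η⁻¹
  have hσRζ : σR ζ = ((η⁻¹ : (𝓞 K)ˣ) : 𝓞 K) := by
    apply RingOfIntegers.coe_injective
    rw [hσRmap ζ, ← hζKdef, hσ]
    have : (algebraMap (𝓞 K) K ((η⁻¹ : (𝓞 K)ˣ) : 𝓞 K)) * (algebraMap (𝓞 K) K ζ) = 1 := by
      rw [← map_mul, ← hηcoe, ← Units.val_mul, inv_mul_cancel, Units.val_one, map_one]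
    exact (eq_inv_of_mul_eq_one_left this).symm
  have hSη : SM η = η⁻¹ := Units.ext hσRζ
  -- t = u / σ(u) is a root of unity
  set t : (𝓞 K)ˣ := u * uσ⁻¹ with htdef
  set tK : K := algebraMap (𝓞 K) K ((t : (𝓞 K)ˣ) : 𝓞 K) with htKdef
  have htfin : IsOfFinOrder tK := by
    have hnorm : ∀ φ : K →+* ℂ, ‖φ tK‖ = 1 := by
      intro φ
      have hcoe : tK = algebraMap (𝓞 K) K ((u : (𝓞 K)ˣ) : 𝓞 K) *
          algebraMap (𝓞 K) K (((uσ⁻¹ : (𝓞 K)ˣ) : (𝓞 K)ˣ) : 𝓞 K) := by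
        rw [htKdef, htdef, Units.val_mul, map_mul]
      have hb : algebraMap (𝓞 K) K ((uσ : (𝓞 K)ˣ) : 𝓞 K) =
          σ (algebraMap (𝓞 K) K ((u : (𝓞 K)ˣ) : 𝓞 K)) := by
        rw [huσcoe, hσRmap]
      have hbb : algebraMap (𝓞 K) K ((uσ : (𝓞 K)ˣ) : 𝓞 K) *
          algebraMap (𝓞 K) K (((uσ⁻¹ : (𝓞 K)ˣ) : (𝓞 K)ˣ) : 𝓞 K) = 1 := by
        rw [← map_mul, ← Units.val_mul, mul_inv_cancel, Units.val_one, map_one]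
      have hstar : ‖φ (algebraMap (𝓞 K) K ((u : (𝓞 K)ˣ) : 𝓞 K))‖ =
          ‖φ (algebraMap (𝓞 K) K ((uσ : (𝓞 K)ˣ) : 𝓞 K))‖ := by
        rw [hb, UL.embed_conj hζKpn σ hσ, norm_star]
      rw [hcoe, map_mul, norm_mul, hstar, ← norm_mul, ← map_mul, hbb, map_one, norm_one]
    obtain ⟨m, hmpos, hm⟩ := NumberField.Embeddings.pow_eq_one_of_norm_eq_one K ℂ
      (RingOfIntegers.isIntegral_coe _) hnorm
    exact isOfFinOrder_iff_pow_eq_one.2 ⟨m, hmpos, hm⟩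
  have hpodd : Odd ((pn : ℕ+) : ℕ) := hp.out.odd_of_ne_two hodd
  obtain ⟨r, hr⟩ := IsPrimitiveRoot.exists_neg_pow_of_isOfFinOrder (n := pn) hpodd hζKpn htfin
  -- lift to units of 𝓞 K : t = (-η) ^ r
  have htunit : t = (-η) ^ r := by
    have hcoe2 : algebraMap (𝓞 K) K ((((-η) ^ r : (𝓞 K)ˣ) : (𝓞 K)ˣ) : 𝓞 K) = (-ζK) ^ r := by
      simp [Units.val_pow_eq_pow_val, Units.val_neg, map_pow, map_neg, hηcoe, hζKdef]
    exact Units.ext (RingOfIntegers.coe_injective (by rw [← htKdef, hcoe2]; exact hr))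
  rcases Nat.even_or_odd r with hre | hro
  · -- even case : r = k + k
    obtain ⟨k, hk⟩ := hre
    have htη : u = η ^ (r : ℤ) * uσ := by
      have h1 : u * uσ⁻¹ = η ^ (r : ℤ) := by
        rw [← htdef, htunit]
        have h2 : (-η) ^ r = ((-1) ^ r) * η ^ r := by rw [← mul_pow, neg_one_mul]
        rw [h2, Even.neg_one_pow ⟨k, hk⟩, one_mul, zpow_natCast]
      rwa [mul_inv_eq_iff_eq_mul] at h1
    have huσeq : uσ = η ^ (-(r : ℤ)) * u := by rw [htη, zpow_neg, inv_mul_cancel_left]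
    refine ⟨u * η ^ (-(k : ℤ)), k, ?_, ?_⟩
    · intro σ' hσ'
      have hσ'σ : σ' = σ := UL.conj_ext hζKpn (by rw [hσ]; exact hσ')
      have hSx : SM (u * η ^ (-(k : ℤ))) = u * η ^ (-(k : ℤ)) := by
        rw [map_mul, map_zpow, hSη, inv_zpow, ← zpow_neg, neg_neg, ← huσdef, huσeq,
          mul_comm (η ^ (-(r : ℤ))) u, mul_assoc, ← zpow_add]
        congr 2
        have : (r : ℤ) = k + k := by exact_mod_cast hk
        omega
      have hcoe3 : σR ((u * η ^ (-(k : ℤ)) : (𝓞 K)ˣ) : 𝓞 K)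
          = ((u * η ^ (-(k : ℤ)) : (𝓞 K)ˣ) : 𝓞 K) :=
        congrArg (fun (w : (𝓞 K)ˣ) => (w : 𝓞 K)) hSx
      rw [hσ'σ, ← hσRmap, hcoe3]
    · rw [mul_assoc, ← zpow_add, neg_add_cancel, zpow_zero, mul_one]
  · -- odd case : contradiction via the prime ζ - 1
    exfalso
    haveI : Fact ((pn : ℕ)).Prime := hp
    have htη : u = -(η ^ (r : ℤ)) * uσ := by
      have h1 : u * uσ⁻¹ = -(η ^ (r : ℤ)) := by
        rw [← htdef, htunit, hro.neg_pow, zpow_natCast]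
      rwa [mul_inv_eq_iff_eq_mul] at h1
    set I : Ideal (𝓞 K) := Ideal.span {ζ - 1} with hIdef
    set q : 𝓞 K →+* 𝓞 K ⧸ I := Ideal.Quotient.mk I with hqdef
    have hqζ : q ζ = 1 := by
      rw [show (1 : 𝓞 K ⧸ I) = q 1 from rfl, hqdef, Ideal.Quotient.mk_eq_mk_iff_sub_mem]
      exact Ideal.mem_span_singleton_self _
    have hqηinv : q ((η⁻¹ : (𝓞 K)ˣ) : 𝓞 K) = 1 := by
      have h3 : q ((η⁻¹ : (𝓞 K)ˣ) : 𝓞 K) * q ζ = 1 := by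
        rw [← map_mul, ← hηcoe, ← Units.val_mul, inv_mul_cancel, Units.val_one, map_one]
      rwa [hqζ, mul_one] at h3
    have hqσ : ∀ v : 𝓞 K, q (σR v) = q v := by
      have hζtop : Algebra.adjoin ℤ ({ζ} : Set (𝓞 K)) = ⊤ :=
        IsCyclotomicExtension.adjoin_primitive_root_eq_top (n := pn) hζ
      intro v
      have hv : v ∈ Algebra.adjoin ℤ ({ζ} : Set (𝓞 K)) := hζtop ▸ Algebra.mem_top
      induction hv using Algebra.adjoin_induction with
      | mem z hz =>
        obtain rfl : z = ζ := hz
        rw [hσRζ, hqηinv, hqζ]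
      | algebraMap r => rw [AlgEquiv.commutes]
      | add x y hx hy ihx ihy => rw [map_add, map_add, map_add, ihx, ihy]
      | mul x y hx hy ihx ihy => rw [map_mul, map_mul, map_mul, ihx, ihy]
    set Q : (𝓞 K)ˣ →* (𝓞 K ⧸ I)ˣ := Units.map (q : 𝓞 K →* 𝓞 K ⧸ I) with hQdef
    have hQη : Q η = 1 := Units.ext (by simpa [hQdef, hηcoe] using hqζ)
    have hQuσ : Q uσ = Q u := Units.ext (by
      show q ((uσ : (𝓞 K)ˣ) : 𝓞 K) = q ((u : (𝓞 K)ˣ) : 𝓞 K)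
      rw [huσcoe, hqσ])
    have h2 : Q u = - Q u := by
      have h3 := congrArg Q htη
      rw [show -(η ^ (r : ℤ)) * uσ = (-1) * (η ^ (r : ℤ) * uσ) by rw [neg_one_mul, neg_mul]] at h3
      rw [map_mul, map_mul, map_zpow, hQη, one_zpow, one_mul, hQuσ] at h3
      have hQneg : Q (-1) = -1 := Units.ext (by simp [hQdef])
      rwa [hQneg, neg_one_mul] at h3
    have h4 : (2 : 𝓞 K ⧸ I) * ((Q u : (𝓞 K ⧸ I)ˣ) : 𝓞 K ⧸ I) = 0 := by
      have h5 := congrArg (fun (w : (𝓞 K ⧸ I)ˣ) => (w : 𝓞 K ⧸ I)) h2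
      simp only [Units.val_neg] at h5
      linear_combination h5
    have h5 : q 2 = 0 := by
      have h6 : (2 : 𝓞 K ⧸ I) * (((Q u : (𝓞 K ⧸ I)ˣ) : 𝓞 K ⧸ I)
          * (((Q u)⁻¹ : (𝓞 K ⧸ I)ˣ) : 𝓞 K ⧸ I)) = 0 := by
        rw [← mul_assoc, h4, zero_mul]
      rw [← Units.val_mul, mul_inv_cancel, Units.val_one, mul_one] at h6
      rw [show (q 2 : 𝓞 K ⧸ I) = (2 : 𝓞 K ⧸ I) from map_ofNat q 2]
      exact h6
    have hdvd2 : (ζ - 1) ∣ (2 : 𝓞 K) := by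
      rw [← Ideal.mem_span_singleton, ← hIdef, ← Ideal.Quotient.eq_zero_iff_mem]
      exact h5
    have htoInt : hζKpn.toInteger = ζ := rfl
    have hdvdp : (ζ - 1) ∣ ((p : ℕ) : 𝓞 K) := by
      have h7 := hζKpn.toInteger_sub_one_dvd_prime'
      rw [htoInt] at h7
      exact_mod_cast h7
    have hprime : Prime (ζ - 1) := by
      have h8 := hζKpn.zeta_sub_one_prime'
      rwa [htoInt] at h8
    obtain ⟨k2, hk2⟩ := hp.out.odd_of_ne_two hodd
    have hone : (ζ - 1) ∣ (1 : 𝓞 K) := by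
      have h7 : ((p : ℕ) : 𝓞 K) - 2 * (k2 : 𝓞 K) = 1 := by
        rw [hk2]; push_cast; ring
      have h8 := dvd_sub hdvdp (hdvd2.mul_right (k2 : 𝓞 K))
      rwa [h7] at h8
    exact hprime.not_unit (isUnit_of_dvd_one hone)
end

section
/- Let p be a prime, k a natural number, K and L fields with L an algebra over K such that L is a {p^k}-cyclotomic extension of K, let ζ ∈ L be a primitive p^k-th root of unity, and assume the p^k-th cyclotomic polynomial is irreducible over K. Then the discriminant over K of the power basis 1, ζ, ζ², …, ζ^(φ(p^k)−1) of L equals (−1)^(φ(p^k)/2) · p^(p^(k−1)·((p−1)·k − 1)), where φ is Euler's totient function and the division by 2 and the subtractions are natural-number (truncated) operations. -/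
open Polynomial

/-- If `p` is a prime and `L/K` is a `p ^ k`-th cyclotomic extension with `ζ` a primitive
`p ^ k`-th root of unity and the `p ^ k`-th cyclotomic polynomial irreducible over `K`, then
the discriminant of the power basis `1, ζ, …, ζ ^ (φ(p ^ k) - 1)` is
`(-1) ^ (φ(p ^ k) / 2) * p ^ (p ^ (k - 1) * ((p - 1) * k - 1))`, where the division and
subtractions are truncated natural-number operations. -/
theorem discr_prime_pow {p : ℕ+} {k : ℕ} {K L : Type*} [Field K] [Field L] [Algebra K L]
    {ζ : L} [hcycl : IsCyclotomicExtension {(↑(p ^ k) : ℕ)} K L] [hp : Fact (p : ℕ).Prime]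
    (hζ : IsPrimitiveRoot ζ ↑(p ^ k))
    (hirr : Irreducible (cyclotomic (↑(p ^ k) : ℕ) K)) :
    Algebra.discr K (hζ.powerBasis K).basis =
      (-1) ^ ((p ^ k : ℕ).totient / 2) *
        (p : K) ^ ((p : ℕ) ^ (k - 1) * (((p : ℕ) - 1) * k - 1)) := by
  have h1 : ((p ^ k : ℕ+) : ℕ) = (p : ℕ) ^ k := PNat.pow_coe p k
  have hcycl' : IsCyclotomicExtension {(p : ℕ) ^ k} K L := h1 ▸ hcycl
  have hζ' : IsPrimitiveRoot ζ ((p : ℕ) ^ k) := h1 ▸ hζ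
  have := IsCyclotomicExtension.discr_prime_pow hζ' (h1 ▸ hirr)
  convert this using 1
  rfl
end
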